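/- Let R be a commutative ring and M an R-module. Every prime p vaguely associated to M lies in the support of M, i.e., the localization M_p is nonzero. -/
import Mathlib

universe u

/-- `MemSubLim R M N` says that the module `N` belongs to `SubLim({M})`, the
smallest isomorphism-closed class of `R`-modules containing `M` and closed
under submodules and direct limits of directed systems. -/
def MemSubLim (R : Type u) [CommRing R]
    (M : Type u) [AddCommGroup M] [Module R M]
    (N : Type u) [AddCommGroup N] [Module R N] : Prop :=
  ∀ P : (X : Type u) → [AddCommGroup X] → [Module R X] → Prop,
    P M →
    (∀ (X : Type u) [AddCommGroup X] [Module R X]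
       (Y : Type u) [AddCommGroup Y] [Module R Y],
        (X ≃ₗ[R] Y) → P X → P Y) →
    (∀ (X : Type u) [AddCommGroup X] [Module R X] (L : Submodule R X),
        P X → P L) →
    (∀ (ι : Type u) [Preorder ι] [IsDirected ι (· ≤ ·)] [Nonempty ι]
        [DecidableEq ι]
        (G : ι → Type u) [∀ i, AddCommGroup (G i)] [∀ i, Module R (G i)]
        (f : ∀ i j, i ≤ j → G i →ₗ[R] G j) [DirectedSystem G (f · · ·)],
        (∀ i, P (G i)) → P (Module.DirectLimit G f)) →
    P N

/-- Over a commutative ring, every prime vaguely associated to a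
module `M` lies in the support of `M`: the localization `M_p` is nonzero. -/
theorem vaguely_associated_mem_support (R : Type u) [CommRing R]
    (M : Type u) [AddCommGroup M] [Module R M]
    (p : Ideal R) (hp : p.IsPrime) (h : MemSubLim R M (R ⧸ p)) :
    Nontrivial (LocalizedModule p.primeCompl M) := by
  by_contra hn
  rw [not_nontrivial_iff_subsingleton] at hn
  -- The class of modules whose localization at p is trivial
  have key : ∀ m : R ⧸ p, ∃ r ∈ p.primeCompl, r • m = 0 := by
    have := h (fun X _ _ => Subsingleton (LocalizedModule p.primeCompl X))
      hn
      (fun X _ _ Y _ _ e hX => by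
        show Subsingleton (LocalizedModule p.primeCompl Y)
        replace hX := LocalizedModule.subsingleton_iff.mp hX
        rw [LocalizedModule.subsingleton_iff]
        intro m
        obtain ⟨r, hr, hr0⟩ := hX (e.symm m)
        exact ⟨r, hr, by
          have : e (r • e.symm m) = e 0 := by rw [hr0]
          simpa using this⟩)
      (fun X _ _ L hX => by
        show Subsingleton (LocalizedModule p.primeCompl L)
        replace hX := LocalizedModule.subsingleton_iff.mp hX
        rw [LocalizedModule.subsingleton_iff]
        intro m
        obtain ⟨r, hr, hr0⟩ := hX (m : X)
        exact ⟨r, hr, Subtype.ext (by simpa using hr0)⟩)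
      (fun ι _ _ _ _ G _ _ f _ hG => by
        show Subsingleton (LocalizedModule p.primeCompl (Module.DirectLimit G f))
        rw [LocalizedModule.subsingleton_iff]
        intro z
        obtain ⟨i, x, rfl⟩ := Module.DirectLimit.exists_of z
        obtain ⟨r, hr, hr0⟩ := (LocalizedModule.subsingleton_iff.mp (hG i)) x
        exact ⟨r, hr, by rw [← map_smul, hr0, map_zero]⟩)
    exact LocalizedModule.subsingleton_iff.mp this
  obtain ⟨r, hr, hr0⟩ := key (1 : R ⧸ p)
  have : r ∈ p := by
    have : Ideal.Quotient.mk p r = 0 := by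
      rwa [Algebra.smul_def, mul_one, Ideal.Quotient.algebraMap_eq] at hr0
    exact (Ideal.Quotient.eq_zero_iff_mem).mp this
  exact hr this
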